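/- If G is a 5-regular finite simple graph on 2n vertices in which every edge lies in a triangle, then G contains at least 2n triangles. -/

import Mathlib

/-- A 5-regular graph on `2n` vertices with every edge in a triangle has at
least `2n` triangles. -/
theorem stmt_7 {V : Type*} [Fintype V] [DecidableEq V] (G : SimpleGraph V)
    [DecidableRel G.Adj] (n : ℕ) (hcard : Fintype.card V = 2 * n)
    (hreg : G.IsRegularOfDegree 5)
    (htri : ∀ u v : V, G.Adj u v → ∃ w : V, G.Adj u w ∧ G.Adj v w) :
    2 * n ≤ (G.cliqueFinset 3).card := by
  classical
  set T := G.cliqueFinset 3 with hT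
  -- each vertex lies in at least 3 triangles
  have key : ∀ v : V, 3 ≤ (T.filter (fun t => v ∈ t)).card := by
    intro v
    set N := G.neighborFinset v with hN
    set D := (N ×ˢ N).filter (fun p : V × V => G.Adj p.1 p.2) with hD
    -- D has at least 5 elements
    have hD5 : 5 ≤ D.card := by
      have hmap : ∀ a ∈ N, (fun a : V =>
          (a, if h : G.Adj v a then (htri v a h).choose else a)) a ∈ D := by
        intro a ha
        have hva : G.Adj v a := (G.mem_neighborFinset v a).1 ha
        simp only [dif_pos hva]
        obtain ⟨h1, h2⟩ := (htri v a hva).choose_spec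
        simp only [hD, Finset.mem_filter, Finset.mem_product]
        exact ⟨⟨ha, (G.mem_neighborFinset v _).2 h1⟩, h2⟩
      have hinj : Set.InjOn (fun a : V =>
          (a, if h : G.Adj v a then (htri v a h).choose else a)) N := by
        intro a _ b _ hab
        exact congrArg Prod.fst hab
      have := Finset.card_le_card_of_injOn _ hmap hinj
      have hNc : N.card = 5 := hreg v
      omega
    -- the map (a,b) ↦ {v,a,b} sends D into triangles containing v, ≤2-to-1
    have hDS : D.card ≤ 2 * (T.filter (fun t => v ∈ t)).card := by
      apply Finset.card_le_mul_card_image_of_maps_to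
        (f := fun p : V × V => insert v {p.1, p.2})
      · intro p hp
        simp only [hD, Finset.mem_filter, Finset.mem_product] at hp
        obtain ⟨⟨h1, h2⟩, h3⟩ := hp
        have hv1 : G.Adj v p.1 := (G.mem_neighborFinset v _).1 h1
        have hv2 : G.Adj v p.2 := (G.mem_neighborFinset v _).1 h2
        refine Finset.mem_filter.2 ⟨?_, Finset.mem_insert_self _ _⟩
        rw [hT, SimpleGraph.mem_cliqueFinset_iff, SimpleGraph.is3Clique_triple_iff]
        exact ⟨hv1, hv2, h3⟩
      · intro b hb
        have hbT : b ∈ T := (Finset.mem_filter.1 hb).1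
        have hvb : v ∈ b := (Finset.mem_filter.1 hb).2
        have hb3 : b.card = 3 := (SimpleGraph.mem_cliqueFinset_iff.1 hbT).card_eq
        have herase : (b.erase v).card = 2 := by
          rw [Finset.card_erase_of_mem hvb, hb3]
        obtain ⟨a, c, hac, habc⟩ := Finset.card_eq_two.1 herase
        have hsub : D.filter (fun p : V × V => insert v {p.1, p.2} = b)
            ⊆ ({(a, c), (c, a)} : Finset (V × V)) := by
          intro p hp
          simp only [Finset.mem_filter, hD, Finset.mem_product] at hp
          obtain ⟨⟨⟨h1, h2⟩, h3⟩, heq⟩ := hp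
          have hadj1 : G.Adj v p.1 := (G.mem_neighborFinset v _).1 h1
          have hadj2 : G.Adj v p.2 := (G.mem_neighborFinset v _).1 h2
          have hne1 : p.1 ≠ v := fun h => G.loopless.irrefl v (h ▸ hadj1)
          have hne2 : p.2 ≠ v := fun h => G.loopless.irrefl v (h ▸ hadj2)
          have hm1 : p.1 ∈ insert v ({p.1, p.2} : Finset V) :=
            Finset.mem_insert.2 (Or.inr (Finset.mem_insert_self _ _))
          have hm2 : p.2 ∈ insert v ({p.1, p.2} : Finset V) :=
            Finset.mem_insert.2 (Or.inr (Finset.mem_insert.2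
              (Or.inr (Finset.mem_singleton_self _))))
          rw [heq] at hm1 hm2
          have hp1 : p.1 ∈ b.erase v := Finset.mem_erase.2 ⟨hne1, hm1⟩
          have hp2 : p.2 ∈ b.erase v := Finset.mem_erase.2 ⟨hne2, hm2⟩
          rw [habc, Finset.mem_insert, Finset.mem_singleton] at hp1 hp2
          have hne12 : p.1 ≠ p.2 := G.ne_of_adj h3
          simp only [Finset.mem_insert, Finset.mem_singleton]
          rcases hp1 with h | h <;> rcases hp2 with h' | h'
          · exact absurd (h.trans h'.symm) hne12
          · left; exact Prod.ext h h'
          · right; exact Prod.ext h h'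
          · exact absurd (h.trans h'.symm) hne12
        calc (D.filter (fun p : V × V => insert v {p.1, p.2} = b)).card
            ≤ ({(a, c), (c, a)} : Finset (V × V)).card := Finset.card_le_card hsub
          _ ≤ 2 := Finset.card_insert_le _ _ |>.trans (by simp)
    omega
  -- double counting
  have hsum : ∑ v : V, (T.filter (fun t => v ∈ t)).card = 3 * T.card := by
    have h3 : ∀ t ∈ T, t.card = 3 := fun t ht =>
      (SimpleGraph.mem_cliqueFinset_iff.1 ht).card_eq
    calc ∑ v : V, (T.filter (fun t => v ∈ t)).card
        = ∑ v : V, ∑ t ∈ T, if v ∈ t then 1 else 0 :=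
          Finset.sum_congr rfl fun v _ => Finset.card_filter _ _
      _ = ∑ t ∈ T, ∑ v : V, if v ∈ t then 1 else 0 := Finset.sum_comm
      _ = ∑ t ∈ T, t.card := by
          refine Finset.sum_congr rfl fun t _ => ?_
          rw [← Finset.card_filter, Finset.filter_mem_eq_inter, Finset.univ_inter]
      _ = ∑ _t ∈ T, 3 := Finset.sum_congr rfl h3
      _ = 3 * T.card := by rw [Finset.sum_const, smul_eq_mul, mul_comm]
  have hlow : 2 * n * 3 ≤ ∑ v : V, (T.filter (fun t => v ∈ t)).card := by
    calc 2 * n * 3 = ∑ _v : V, 3 := by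
          rw [Finset.sum_const, smul_eq_mul, Finset.card_univ, hcard]
      _ ≤ _ := Finset.sum_le_sum fun v _ => key v
  omega
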